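/- Let D be a noncommutative division ring (of arbitrary characteristic), and let f, g : D → D be additive maps such that f(x) = g(x⁻¹) for all nonzero x ∈ D. Then f = 0 and g = 0. -/

import Mathlib

theorem stmt_2 {D : Type*} [DivisionRing D]
    (hnc : ∃ a b : D, a * b ≠ b * a)
    (f g : D → D)
    (hf : ∀ x y : D, f (x + y) = f x + f y)
    (hg : ∀ x y : D, g (x + y) = g x + g y)
    (h : ∀ x : D, x ≠ 0 → f x = g x⁻¹) :
    f = 0 ∧ g = 0 := by
  obtain ⟨A, B, hAB⟩ := hnc
  -- basic additive facts
  have f0 : f 0 = 0 := by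
    have h0 := hf 0 0
    rw [add_zero] at h0
    exact (add_eq_right.mp h0.symm)
  have g0 : g 0 = 0 := by
    have h0 := hg 0 0
    rw [add_zero] at h0
    exact (add_eq_right.mp h0.symm)
  have fsub : ∀ x y : D, f (x - y) = f x - f y := by
    intro x y
    have h1 := hf (x - y) y
    rw [sub_add_cancel] at h1
    exact eq_sub_of_add_eq h1.symm
  -- element facts from noncommutativity
  have hA0 : A ≠ 0 := by rintro rfl; exact hAB (by noncomm_ring)
  have hB0 : B ≠ 0 := by rintro rfl; exact hAB (by noncomm_ring)
  have hA1 : A ≠ 1 := by rintro rfl; exact hAB (by noncomm_ring)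
  have hB1 : B ≠ 1 := by rintro rfl; exact hAB (by noncomm_ring)
  have hAm1 : A ≠ -1 := by rintro rfl; exact hAB (by noncomm_ring)
  have hBm1 : B ≠ -1 := by rintro rfl; exact hAB (by noncomm_ring)
  have hBA : B ≠ A := by rintro rfl; exact hAB rfl
  have hAB0 : A + B ≠ 0 := by
    intro hh
    have hB : B = -A := neg_eq_of_add_eq_zero_right hh |>.symm
    exact hAB (by rw [hB]; noncomm_ring)
  have hAB1 : A + B ≠ 1 := by
    intro hh
    have hB : B = 1 - A := by rw [← hh]; abel
    exact hAB (by rw [hB]; noncomm_ring)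
  have h1BA : 1 + B ≠ A := by
    intro hh
    exact hAB (by rw [← hh]; noncomm_ring)
  have h1AB : 1 + A ≠ B := by
    intro hh
    exact hAB (by rw [← hh]; noncomm_ring)
  have h1B0 : 1 + B ≠ 0 := by
    intro hh
    exact hBm1 (eq_neg_of_add_eq_zero_right hh)
  have h1A0 : 1 + A ≠ 0 := by
    intro hh
    exact hAm1 (eq_neg_of_add_eq_zero_right hh)
  have h1mA0 : (1 : D) - A ≠ 0 := sub_ne_zero.mpr (Ne.symm hA1)
  have h1mA1 : (1 : D) - A ≠ 1 := fun hh => hA0 (sub_eq_self.mp hh)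
  -- key identity: f(aba) = f a - g b
  have key : ∀ a b : D, a ≠ 0 → b ≠ 0 → b * a ≠ 1 → f (a * b * a) = f a - g b := by
    intro a b ha hb h1
    have hu : (1 : D) - b * a ≠ 0 := sub_ne_zero.mpr (Ne.symm h1)
    have e1 : a - a * b * a = a * (1 - b * a) := by noncomm_ring
    have hne1 : a - a * b * a ≠ 0 := by rw [e1]; exact mul_ne_zero ha hu
    have e2 : b⁻¹ - a = b⁻¹ * (1 - b * a) := by
      rw [mul_sub, mul_one, ← mul_assoc, inv_mul_cancel₀ hb, one_mul]
    have hne2 : b⁻¹ - a ≠ 0 := by rw [e2]; exact mul_ne_zero (inv_ne_zero hb) hu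
    have hinv : (a - a * b * a)⁻¹ = a⁻¹ + (b⁻¹ - a)⁻¹ := by
      rw [e1, e2, mul_inv_rev, mul_inv_rev, inv_inv]
      apply mul_left_cancel₀ hu
      rw [← mul_assoc, mul_inv_cancel₀ hu, one_mul, mul_add, ← mul_assoc,
        mul_inv_cancel₀ hu, one_mul, sub_mul, one_mul, mul_assoc,
        mul_inv_cancel₀ ha, mul_one]
      abel
    have lhs : f (a - a * b * a) = f a - f (a * b * a) := fsub _ _
    have rhs : f (a - a * b * a) = g b := by
      rw [h _ hne1, hinv, hg, ← h a ha, ← h _ hne2, fsub,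
        h b⁻¹ (inv_ne_zero hb), inv_inv]
      abel
    have hE : f a - f (a * b * a) = g b := lhs.symm.trans rhs
    rw [← hE]; abel
  -- f b + g b = f 1 off {0,1}
  have hfb : ∀ b : D, b ≠ 0 → b ≠ 1 → f b + g b = f 1 := by
    intro b hb0 hb1
    have hk := key 1 b one_ne_zero hb0 (by rwa [mul_one])
    rw [one_mul, mul_one] at hk
    rw [hk]; abel
  -- f 1 = 0
  have hf1 : f 1 = 0 := by
    have h1 := hfb A hA0 hA1
    have h2 := hfb B hB0 hB1
    have h3 := hfb (A + B) hAB0 hAB1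
    rw [hf, hg] at h3
    have hsum : f 1 + f 1 = f 1 := by
      calc f 1 + f 1 = (f A + g A) + (f B + g B) := by rw [h1, h2]
        _ = f A + f B + (g A + g B) := by abel
        _ = f 1 := h3
    exact add_eq_right.mp hsum
  -- g = -f
  have hgf : ∀ b : D, g b = -f b := by
    intro b
    by_cases hb0 : b = 0
    · rw [hb0, f0, g0, neg_zero]
    by_cases hb1 : b = 1
    · subst hb1
      have h1 := hfb A hA0 hA1
      have h2 := hfb (1 - A) h1mA0 h1mA1
      have eA : A + (1 - A) = (1 : D) := by abel
      have gA : g A = -f A := eq_neg_of_add_eq_zero_right (by rw [h1, hf1])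
      have gA2 : g (1 - A) = -f (1 - A) := eq_neg_of_add_eq_zero_right (by rw [h2, hf1])
      have ef : f 1 = f A + f (1 - A) := by
        conv_lhs => rw [← eA]
        rw [hf]
      have eg : g 1 = g A + g (1 - A) := by
        conv_lhs => rw [← eA]
        rw [hg]
      rw [eg, gA, gA2, hf1, neg_zero, ← neg_add]
      rw [hf1] at ef
      rw [← ef, neg_zero]
    · have h1 := hfb b hb0 hb1
      rw [hf1] at h1
      exact eq_neg_of_add_eq_zero_right h1
  -- main: f a = 0 for a ≠ 0
  have main2 : ∀ a b : D, a ≠ 0 → b ≠ 0 → b * a ≠ 1 → f (a * b * a) = f a + f b := by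
    intro a b ha hb h1
    rw [key a b ha hb h1, hgf b, sub_neg_eq_add]
  have fmain : ∀ a : D, a ≠ 0 → f a = 0 := by
    intro a ha
    have hconv : ∀ x : D, x ≠ a⁻¹ → x * a ≠ 1 := by
      intro x hx hxa
      apply hx
      rw [← one_mul a⁻¹, ← hxa, mul_assoc, mul_inv_cancel₀ ha, mul_one]
    obtain ⟨x, y, hx0, hy0, hxy0, hxc, hyc, hxyc⟩ :
        ∃ x y : D, x ≠ 0 ∧ y ≠ 0 ∧ x + y ≠ 0 ∧ x ≠ a⁻¹ ∧ y ≠ a⁻¹ ∧ x + y ≠ a⁻¹ := by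
      by_cases hAc : A = a⁻¹
      · exact ⟨1, B, one_ne_zero, hB0, h1B0, by rw [← hAc]; exact Ne.symm hA1,
          by rw [← hAc]; exact hBA, by rw [← hAc]; exact h1BA⟩
      by_cases hBc : B = a⁻¹
      · exact ⟨1, A, one_ne_zero, hA0, h1A0, by rw [← hBc]; exact Ne.symm hB1,
          by rw [← hBc]; exact Ne.symm hBA, by rw [← hBc]; exact h1AB⟩
      by_cases hABc : A + B = a⁻¹
      · refine ⟨1, A, one_ne_zero, hA0, h1A0, by rw [← hABc]; exact Ne.symm hAB1,
          ?_, ?_⟩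
        · rw [← hABc]
          intro hh
          exact hB0 (left_eq_add.mp hh)
        · rw [← hABc]
          intro hh
          rw [add_comm A B] at hh
          exact hB1 (add_right_cancel hh).symm
      · exact ⟨A, B, hA0, hB0, hAB0, hAc, hBc, hABc⟩
    have E1 : f (a * (x + y) * a) = f a + (f x + f y) := by
      rw [main2 a (x + y) ha hxy0 (hconv _ hxyc), hf]
    have E2 : f (a * (x + y) * a) = (f a + f x) + (f a + f y) := by
      have expand : a * (x + y) * a = a * x * a + a * y * a := by noncomm_ring
      rw [expand, hf, main2 a x ha hx0 (hconv _ hxc), main2 a y ha hy0 (hconv _ hyc)]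
    have hE : f a + (f x + f y) = f a + (f a + (f x + f y)) := by
      calc f a + (f x + f y) = f a + f x + (f a + f y) := E1.symm.trans E2
        _ = f a + (f a + (f x + f y)) := by abel
    exact right_eq_add.mp (add_left_cancel hE)
  constructor
  · funext x
    by_cases hx : x = 0
    · rw [hx, f0]; rfl
    · rw [fmain x hx]; rfl
  · funext x
    simp only [Pi.zero_apply]
    rw [hgf x]
    by_cases hx : x = 0
    · rw [hx, f0, neg_zero]
    · rw [fmain x hx, neg_zero]
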